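/- Deciding whether a given set of k edges in a 2-terminal directed graph is serial (contained in a simple directed s-t path) is NP-hard already for k=3; equivalently, the 2-vertex-disjoint-paths problem in directed graphs reduces to it: given a directed graph and vertices x_1,y_1,x_2,y_2, there exist vertex-disjoint directed paths x_1-y_1 and x_2-y_2 if and only if, in the augmented 2-terminal graph (add s with edges to all vertices, t with edges from all vertices, and the edge (y_1,x_2)), the set {(s,x_1),(y_1,x_2),(y_2,t)} is serial. -/

import Mathlib

variable {V : Type*}

/-- `p` is a simple directed path in the edge relation `E`. -/
def IsDiPath (E : V → V → Prop) (p : List V) : Prop := p.Chain' E ∧ p.Nodup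

/-- `p` is a simple directed path from `x` to `y`. -/
def PathFrom (E : V → V → Prop) (p : List V) (x y : V) : Prop :=
  IsDiPath E p ∧ p.head? = some x ∧ p.getLast? = some y

/-- the edge `(a,b)` is traversed by the path `p`. -/
def EdgeOn (a b : V) (p : List V) : Prop := (a, b) ∈ p.zip p.tail

/-- directed reachability. -/
def Reach (E : V → V → Prop) : V → V → Prop := Relation.ReflTransGen E

/-- no directed cycles. -/
def Acyclic (E : V → V → Prop) : Prop := ∀ a b, E a b → ¬ Reach E b a

/-- 2-terminal graph (edge version): no self-loops, some `s`-`t` path exists and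
every edge lies on a simple `s`-`t` path. -/
def TwoTerminalE (E : V → V → Prop) (s t : V) : Prop :=
  (∀ v, ¬ E v v) ∧ (∃ p, PathFrom E p s t) ∧
  ∀ a b, E a b → ∃ p, PathFrom E p s t ∧ EdgeOn a b p

/-- 2-terminal graph (full version): no self-loops and every vertex and edge
lies on a simple `s`-`t` path. -/
def TwoTerminalF (E : V → V → Prop) (s t : V) : Prop :=
  (∀ v, ¬ E v v) ∧ (∀ v, ∃ p, PathFrom E p s t ∧ v ∈ p) ∧
  ∀ a b, E a b → ∃ p, PathFrom E p s t ∧ EdgeOn a b p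

/-- `C` is an `s`-`t` edge cut. -/
def IsCut (E : V → V → Prop) (s t : V) (C : Set (V × V)) : Prop :=
  (∀ e ∈ C, E e.1 e.2) ∧ ¬ ∃ p, PathFrom (fun a b => E a b ∧ (a, b) ∉ C) p s t

def IsMinCut (E : V → V → Prop) (s t : V) (C : Set (V × V)) : Prop :=
  IsCut E s t C ∧ ∀ C' ⊂ C, ¬ IsCut E s t C'

/-- `S` is parallel: contained in some minimal `s`-`t` cut. -/
def Parallel (E : V → V → Prop) (s t : V) (S : Set (V × V)) : Prop :=
  ∃ C, IsMinCut E s t C ∧ S ⊆ C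

/-- `S` is serial: contained in a simple directed `s`-`t` path. -/
def Serial (E : V → V → Prop) (s t : V) (S : Set (V × V)) : Prop :=
  ∃ p, PathFrom E p s t ∧ ∀ e ∈ S, EdgeOn e.1 e.2 p


lemma edgeOn_iff {a b : V} {p : List V} :
    EdgeOn a b p ↔ ∃ (i : ℕ) (h : i + 1 < p.length), p[i] = a ∧ p[i+1] = b := by
  have hz : (p.zip p.tail).length = p.length - 1 := by
    simp [List.length_zip, List.length_tail]
  unfold EdgeOn
  rw [List.mem_iff_getElem]
  constructor
  · rintro ⟨i, h, hi⟩
    have h' : i + 1 < p.length := by omega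
    rw [List.getElem_zip, List.getElem_tail, Prod.mk.injEq] at hi
    exact ⟨i, h', hi⟩
  · rintro ⟨i, h, h1, h2⟩
    exact ⟨i, by omega, by rw [List.getElem_zip, List.getElem_tail, Prod.mk.injEq]; exact ⟨h1, h2⟩⟩

lemma head?_getElem {p : List V} {x : V} (h : p.head? = some x) :
    ∃ h0 : 0 < p.length, p[0] = x := by
  rw [List.head?_eq_getElem?] at h
  rcases List.getElem?_eq_some_iff.mp h with ⟨h0, hv⟩
  exact ⟨h0, hv⟩

lemma getLast?_getElem {p : List V} {x : V} (h : p.getLast? = some x) :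
    ∃ h0 : 0 < p.length, p[p.length - 1]'(by omega) = x := by
  rw [List.getLast?_eq_getElem?] at h
  rcases List.getElem?_eq_some_iff.mp h with ⟨h0, hv⟩
  exact ⟨by omega, hv⟩

/-- The reduction from 2-vertex-disjoint-paths to seriality: vertex-disjoint paths
`x₁–y₁` and `x₂–y₂` exist in `D` iff in the augmented 2-terminal graph (new source
`s` with edges to all vertices, new target `t` with edges from all vertices, and
the extra edge `(y₁,x₂)`) the set `{(s,x₁),(y₁,x₂),(y₂,t)}` is serial. -/
theorem stmt19 {V : Type*} (D : V → V → Prop) (x₁ y₁ x₂ y₂ : V)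
    (hd : [x₁, y₁, x₂, y₂].Nodup) :
    let E : (V ⊕ Bool) → (V ⊕ Bool) → Prop := fun u v =>
      (∃ w, u = Sum.inr false ∧ v = Sum.inl w) ∨
      (∃ w, u = Sum.inl w ∧ v = Sum.inr true) ∨
      (∃ w z, u = Sum.inl w ∧ v = Sum.inl z ∧ (D w z ∨ (w = y₁ ∧ z = x₂)))
    ((∃ p q : List V, PathFrom D p x₁ y₁ ∧ PathFrom D q x₂ y₂ ∧ ∀ v ∈ p, v ∉ q) ↔
      Serial E (Sum.inr false) (Sum.inr true)
        {(Sum.inr false, Sum.inl x₁), (Sum.inl y₁, Sum.inl x₂),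
          (Sum.inl y₂, Sum.inr true)}) := by
  
  intro E
  constructor
  · have hEl : ∀ w, E (Sum.inr false) (Sum.inl w) := fun w => Or.inl ⟨w, rfl, rfl⟩
    have hEr : ∀ w, E (Sum.inl w) (Sum.inr true) := fun w => Or.inr (Or.inl ⟨w, rfl, rfl⟩)
    have hEm : ∀ w z, D w z ∨ (w = y₁ ∧ z = x₂) → E (Sum.inl w) (Sum.inl z) :=
      fun w z h => Or.inr (Or.inr ⟨w, z, rfl, rfl, h⟩)
    rintro ⟨p, q, ⟨⟨hpc, hpn⟩, hph, hpl⟩, ⟨⟨hqc, hqn⟩, hqh, hql⟩, hdisj⟩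
    obtain ⟨hp0, hpx⟩ := head?_getElem hph
    obtain ⟨hp1, hpy⟩ := getLast?_getElem hpl
    obtain ⟨hq0, hqx⟩ := head?_getElem hqh
    obtain ⟨hq1, hqy⟩ := getLast?_getElem hql
    set n := p.length with hn
    set m := q.length with hm
    have hpD : ∀ j (h : j + 1 < n), D (p[j]'(by omega)) (p[j+1]'(by omega)) := by
      rw [List.Chain', List.isChain_iff_getElem] at hpc
      intro j h
      simpa using hpc j (by omega)
    have hqD : ∀ j (h : j + 1 < m), D (q[j]'(by omega)) (q[j+1]'(by omega)) := by
      rw [List.Chain', List.isChain_iff_getElem] at hqc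
      intro j h
      simpa using hqc j (by omega)
    set r : List (V ⊕ Bool) :=
      Sum.inr false :: (p.map Sum.inl ++ (q.map Sum.inl ++ [Sum.inr true])) with hrdef
    have hrl : r.length = n + m + 2 := by simp [hrdef]; omega
    have key : ∀ i (hi : i < r.length), r[i] =
        if i = 0 then Sum.inr false
        else if h : i ≤ n then Sum.inl (p[i-1]'(by omega))
        else if h2 : i ≤ n + m then Sum.inl (q[i-n-1]'(by omega))
        else Sum.inr true := by
      intro i hi
      rcases i with _ | j
      · simp [hrdef]
      · rw [if_neg (Nat.succ_ne_zero j)]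
        by_cases hj : j < n
        · rw [dif_pos (by omega)]
          rw [show r[j+1] = (p.map Sum.inl ++ (q.map Sum.inl ++ [Sum.inr true]))[j]'(by simp; omega)
              from List.getElem_cons_succ .. ,
            List.getElem_append_left (by simp; omega), List.getElem_map]
          simp
        · by_cases hj2 : j < n + m
          · rw [dif_neg (by omega), dif_pos (by omega)]
            rw [show r[j+1] = (p.map Sum.inl ++ (q.map Sum.inl ++ [Sum.inr true]))[j]'(by simp; omega)
                from List.getElem_cons_succ .. ,
              List.getElem_append_right (by simp; omega),
              List.getElem_append_left (by simp; omega), List.getElem_map]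
            simp only [List.length_map, show j + 1 - n - 1 = j - n from by omega, hn, show j + 1 - p.length - 1 = j - p.length from by omega]
          · rw [dif_neg (by omega), dif_neg (by omega)]
            rw [show r[j+1] = (p.map Sum.inl ++ (q.map Sum.inl ++ [Sum.inr true]))[j]'(by simp; omega)
                from List.getElem_cons_succ .. ,
              List.getElem_append_right (by simp; omega),
              List.getElem_append_right (by simp; omega)]
            simp
    refine ⟨r, ⟨⟨?_, ?_⟩, ?_, ?_⟩, ?_⟩
    · -- Chain'
      rw [List.Chain', List.isChain_iff_getElem]
      intro i hi
      rw [hrl] at hi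
      rw [key i (by omega), key (i+1) (by omega)]
      by_cases h1 : i = 0
      · subst h1
        rw [if_pos rfl, if_neg (by omega), dif_pos (by omega)]
        exact hEl _
      · rw [if_neg h1, if_neg (by omega)]
        by_cases h2 : i + 1 ≤ n
        · rw [dif_pos (by omega), dif_pos h2]
          apply hEm
          left
          have := hpD (i-1) (by omega)
          simpa only [show i - 1 + 1 = i + 1 - 1 from by omega] using this
        · by_cases h3 : i ≤ n
          · rw [dif_pos h3, dif_neg h2, dif_pos (by omega)]
            apply hEm
            right
            refine ⟨?_, ?_⟩
            · simp only [show i - 1 = n - 1 from by omega]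
              exact hpy
            · simp only [show i + 1 - n - 1 = 0 from by omega]
              exact hqx
          · by_cases h4 : i + 1 ≤ n + m
            · rw [dif_neg h3, dif_pos (by omega), dif_neg h2, dif_pos h4]
              apply hEm
              left
              have := hqD (i-n-1) (by omega)
              simpa only [show i - n - 1 + 1 = i + 1 - n - 1 from by omega] using this
            · rw [dif_neg h3, dif_pos (by omega), dif_neg h2, dif_neg h4]
              exact hEr _
    · -- Nodup
      rw [List.nodup_iff_injective_get]
      rintro ⟨i, hi⟩ ⟨j, hj⟩ hij
      simp only [List.get_eq_getElem] at hij
      rw [key i hi, key j hj] at hij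
      rw [hrl] at hi hj
      apply Fin.ext
      show i = j
      split_ifs at hij
      all_goals try omega
      all_goals try (exfalso; simpa using hij)
      all_goals rw [Sum.inl.injEq] at hij
      all_goals first
        | (have := (hpn.getElem_inj_iff).mp hij; omega)
        | (have := (hqn.getElem_inj_iff).mp hij; omega)
        | exact absurd (by rw [← hij]; exact List.getElem_mem _) (hdisj _ (List.getElem_mem _))
        | exact absurd (by rw [hij]; exact List.getElem_mem _) (hdisj _ (List.getElem_mem _))
    · simp [hrdef]
    · rw [List.getLast?_eq_getElem?, List.getElem?_eq_getElem (by omega),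
        key _ (by omega), if_neg (by omega), dif_neg (by omega), dif_neg (by omega)]
    · rintro e he
      simp only [Set.mem_insert_iff, Set.mem_singleton_iff] at he
      rcases he with rfl | rfl | rfl
      · rw [edgeOn_iff]
        refine ⟨0, by omega, ?_, ?_⟩
        · rw [key 0 (by omega), if_pos rfl]
        · rw [key 1 (by omega), if_neg one_ne_zero, dif_pos (by omega)]
          exact congrArg Sum.inl hpx
      · rw [edgeOn_iff]
        refine ⟨n, by omega, ?_, ?_⟩
        · rw [key n (by omega), if_neg (by omega), dif_pos le_rfl]
          exact congrArg Sum.inl hpy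
        · rw [key (n+1) (by omega), if_neg (by omega), dif_neg (by omega), dif_pos (by omega)]
          refine congrArg Sum.inl ?_
          simpa only [show n + 1 - n - 1 = 0 from by omega] using hqx
      · rw [edgeOn_iff]
        refine ⟨n + m, by omega, ?_, ?_⟩
        · rw [key (n+m) (by omega), if_neg (by omega), dif_neg (by omega), dif_pos le_rfl]
          refine congrArg Sum.inl ?_
          simpa only [show n + m - n - 1 = m - 1 from by omega] using hqy
        · rw [key (n+m+1) (by omega), if_neg (by omega), dif_neg (by omega), dif_neg (by omega)]
  · rintro ⟨r, ⟨⟨hc, hn⟩, hh, hl⟩, hedges⟩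
    have e1 := hedges (Sum.inr false, Sum.inl x₁) (by simp)
    have e2 := hedges (Sum.inl y₁, Sum.inl x₂) (by simp)
    have e3 := hedges (Sum.inl y₂, Sum.inr true) (by simp)
    rw [edgeOn_iff] at e1 e2 e3
    obtain ⟨a, ha, has, hax⟩ := e1
    obtain ⟨i, hi, hiy, hix⟩ := e2
    obtain ⟨b, hb, hby, hbt⟩ := e3
    obtain ⟨h0, hr0⟩ := head?_getElem hh
    obtain ⟨h1, hrN⟩ := getLast?_getElem hl
    set N := r.length with hN
    have ha0 : a = 0 := hn.getElem_inj_iff.mp (has.trans hr0.symm)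
    subst ha0
    have hbN : b + 1 = N - 1 := hn.getElem_inj_iff.mp (hbt.trans hrN.symm)
    have hi0 : i ≠ 0 := by
      rintro rfl
      rw [hr0] at hiy
      simp at hiy
    have hi1 : i + 1 ≠ N - 1 := by
      intro hEq
      simp only [hEq] at hix
      rw [hrN] at hix
      simp at hix
    have hb2 : b = N - 2 := by omega
    subst hb2
    have hiN : i + 1 ≤ N - 2 := by omega
    have hNge : 4 ≤ N := by omega
    have hmid : ∀ j (hj : j < N), 1 ≤ j → j ≤ N - 2 → ∃ v, r[j]'hj = Sum.inl v := by
      intro j hj hj1 hj2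
      cases hrj : r[j]'hj with
      | inl v => exact ⟨v, rfl⟩
      | inr bb =>
        exfalso
        cases bb
        · have : j = 0 := hn.getElem_inj_iff.mp (hrj.trans hr0.symm)
          omega
        · have : j = N - 1 := hn.getElem_inj_iff.mp (hrj.trans hrN.symm)
          omega
    have hfl : ∀ j (hj : j < N), 1 ≤ j → j ≤ N - 2 →
        Sum.inl (Sum.elim id (fun _ => x₁) (r[j]'hj)) = r[j]'hj := by
      intro j hj hj1 hj2
      obtain ⟨v, hv⟩ := hmid j hj hj1 hj2
      rw [hv]
      rfl
    rw [List.Chain', List.isChain_iff_getElem] at hc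
    have hbound1 : ∀ j : Fin i, j.1 + 1 < N := fun j => by have := j.2; omega
    have hbound2 : ∀ k : Fin (N - 2 - i), i + 1 + k.1 < N := fun k => by have := k.2; omega
    refine ⟨List.ofFn (fun j : Fin i => Sum.elim id (fun _ => x₁) (r[j.1 + 1]'(hbound1 j))),
      List.ofFn (fun k : Fin (N - 2 - i) => Sum.elim id (fun _ => x₁) (r[i + 1 + k.1]'(hbound2 k))),
      ⟨⟨?_, ?_⟩, ?_, ?_⟩, ⟨⟨?_, ?_⟩, ?_, ?_⟩, ?_⟩
    · -- Chain' D p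
      rw [List.Chain', List.isChain_iff_getElem]
      intro j hj
      simp only [List.length_ofFn, List.get_eq_getElem, List.getElem_ofFn] at hj ⊢
      obtain ⟨v, hv⟩ := hmid (j+1) (by omega) (by omega) (by omega)
      obtain ⟨v', hv'⟩ := hmid (j+1+1) (by omega) (by omega) (by omega)
      have hE := hc (j+1) (by omega)
      rw [hv, hv'] at hE ⊢
      simp only [Sum.elim_inl, id_eq]
      rcases hE with ⟨w, hw, -⟩ | ⟨w, -, hw⟩ | ⟨w, z, hw, hz, hD | ⟨hwy, -⟩⟩
      · exact absurd hw (by simp)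
      · exact absurd hw (by simp)
      · injection hw with hw; injection hz with hz
        rw [hw, hz]
        exact hD
      · exfalso
        injection hw with hw
        rw [hw, hwy] at hv
        have : j + 1 = i := hn.getElem_inj_iff.mp (hv.trans hiy.symm)
        omega
    · -- Nodup p
      rw [List.nodup_iff_injective_get]
      rintro ⟨j, hj⟩ ⟨k, hk⟩ hjk
      simp only [List.length_ofFn] at hj hk
      simp only [List.get_eq_getElem, List.getElem_ofFn] at hjk
      apply Fin.ext
      show j = k
      have := congrArg (Sum.inl : V → V ⊕ Bool) hjk
      rw [hfl (j+1) (by omega) (by omega) (by omega), hfl (k+1) (by omega) (by omega) (by omega)] at this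
      have := hn.getElem_inj_iff.mp this
      omega
    · -- head? p
      rw [List.head?_eq_getElem?, List.getElem?_eq_getElem (by simp; omega)]
      simp only [List.getElem_ofFn]
      rw [hax]
      rfl
    · -- getLast? p
      rw [List.getLast?_eq_getElem?]
      simp only [List.length_ofFn]
      rw [List.getElem?_eq_getElem (by rw [List.length_ofFn]; omega)]
      simp only [List.getElem_ofFn]
      simp only [show i - 1 + 1 = i from by omega, hiy]
      rfl
    · -- Chain' D q
      rw [List.Chain', List.isChain_iff_getElem]
      intro j hj
      simp only [List.length_ofFn, List.get_eq_getElem, List.getElem_ofFn] at hj ⊢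
      obtain ⟨v, hv⟩ := hmid (i+1+j) (by omega) (by omega) (by omega)
      obtain ⟨v', hv'⟩ := hmid (i+1+j+1) (by omega) (by omega) (by omega)
      have hE := hc (i+1+j) (by omega)
      simp only [show i+1+(j+1) = i+1+j+1 from by omega]
      rw [hv, hv'] at hE ⊢
      simp only [Sum.elim_inl, id_eq]
      rcases hE with ⟨w, hw, -⟩ | ⟨w, -, hw⟩ | ⟨w, z, hw, hz, hD | ⟨hwy, -⟩⟩
      · exact absurd hw (by simp)
      · exact absurd hw (by simp)
      · injection hw with hw; injection hz with hz
        rw [hw, hz]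
        exact hD
      · exfalso
        injection hw with hw
        rw [hw, hwy] at hv
        have : i + 1 + j = i := hn.getElem_inj_iff.mp (hv.trans hiy.symm)
        omega
    · -- Nodup q
      rw [List.nodup_iff_injective_get]
      rintro ⟨j, hj⟩ ⟨k, hk⟩ hjk
      simp only [List.length_ofFn] at hj hk
      simp only [List.get_eq_getElem, List.getElem_ofFn] at hjk
      apply Fin.ext
      show j = k
      have := congrArg (Sum.inl : V → V ⊕ Bool) hjk
      rw [hfl (i+1+j) (by omega) (by omega) (by omega),
        hfl (i+1+k) (by omega) (by omega) (by omega)] at this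
      have := hn.getElem_inj_iff.mp this
      omega
    · -- head? q
      rw [List.head?_eq_getElem?, List.getElem?_eq_getElem (by simp; omega)]
      simp only [List.getElem_ofFn]
      simp only [show i + 1 + 0 = i + 1 from by omega, hix]
      rfl
    · -- getLast? q
      rw [List.getLast?_eq_getElem?]
      simp only [List.length_ofFn]
      rw [List.getElem?_eq_getElem (by rw [List.length_ofFn]; omega)]
      simp only [List.getElem_ofFn]
      simp only [show i + 1 + (N - 2 - i - 1) = N - 2 from by omega, hby]
      rfl
    · -- disjoint
      intro v hvp hvq
      simp only [List.mem_ofFn, Set.mem_range] at hvp hvq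
      obtain ⟨⟨j, hj⟩, hvj⟩ := hvp
      obtain ⟨⟨k, hk⟩, hvk⟩ := hvq
      have heq := hvj.trans hvk.symm
      have := congrArg (Sum.inl : V → V ⊕ Bool) heq
      rw [hfl (j+1) (by omega) (by omega) (by omega),
        hfl (i+1+k) (by omega) (by omega) (by omega)] at this
      have := hn.getElem_inj_iff.mp this
      omega
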